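/- arXiv:1202.1709 — 4 statements merged into one kernel-verified Lean document; each statement's English description precedes it below -/
import Mathlib

section
/- For the spanning tree of a sector of the heptagrid {7,3} — in which the root is white, every white node has exactly 3 sons of which exactly one is black, and every black node has exactly 2 sons of which exactly one is black — the number of nodes on level n equals the Fibonacci number f_{2n+1}, where (f_m) is the Fibonacci sequence with f_1 = 1, f_2 = 2. Concretely: defining w, b : ℕ → ℕ by w 0 = 1, b 0 = 0, w (n+1) = 2·w n + b n, b (n+1) = w n + b n, one has w n + b n = Nat.fib (2n + 2) for all n. -/
/-- In the Fibonacci tree spanning a sector of the heptagrid `{7,3}`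
(root white; a white node has 3 sons, exactly one black; a black node has
2 sons, exactly one black), let `w n` and `b n` be the numbers of white
and black nodes on level `n`.  Then the number of nodes on level `n` is
the Fibonacci number `f_{2n+1}` (with `f_1 = 1`, `f_2 = 2`), i.e.
`w n + b n = Nat.fib (2*n + 2)`. -/
theorem heptagrid_level_count_eq_fib (w b : ℕ → ℕ)
    (hw0 : w 0 = 1) (hb0 : b 0 = 0)
    (hw : ∀ n, w (n + 1) = 2 * w n + b n)
    (hb : ∀ n, b (n + 1) = w n + b n) :
    ∀ n, w n + b n = Nat.fib (2 * n + 2) := by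
  have key : ∀ n, w n = Nat.fib (2 * n + 1) ∧ b n = Nat.fib (2 * n) := by
    intro n
    induction n with
    | zero => simp [hw0, hb0]
    | succ k ih =>
      obtain ⟨h1, h2⟩ := ih
      constructor
      · rw [hw, h1, h2]
        have : 2 * (k + 1) + 1 = (2 * k + 1) + 1 + 1 := by ring
        rw [this, Nat.fib_add_two, Nat.fib_add_two]
        ring
      · rw [hb, h1, h2]
        have : 2 * (k + 1) = 2 * k + 2 := by ring
        rw [this, Nat.fib_add_two]
        ring
  intro n
  obtain ⟨h1, h2⟩ := key n
  rw [h1, h2, Nat.fib_add_two]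
  ring
end

section
/- Let p ≥ 7 be an integer and consider the tree spanning a sector of the tiling {p,3}: the root is white, every white node has exactly p − 4 sons of which exactly one is black, and every black node has exactly p − 5 sons of which exactly one is black. Define w, b : ℕ → ℕ by w 0 = 1, b 0 = 0, w (n+1) = (p−5)·w n + (p−6)·b n, b (n+1) = w n + b n, and let u n = w n + b n be the number of nodes on level n. Then u 0 = 1, u 1 = p − 4, and for all n, u (n+2) + u n = (p − 4) · u (n+1). -/
/-- In the tree spanning a sector of the tiling `{p,3}` (`p ≥ 7`): the root is
white, a white node has `p-4` sons of which exactly one is black, and a black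
node has `p-5` sons of which exactly one is black.  With `w n`, `b n` the
numbers of white and black nodes on level `n` and `u n = w n + b n` the total
number of nodes on level `n`, one has `u 0 = 1`, `u 1 = p - 4` and
`u (n+2) + u n = (p-4) * u (n+1)` for all `n`. -/
theorem sector_tree_level_recurrence (p : ℕ) (hp : 7 ≤ p) (w b u : ℕ → ℕ)
    (hw0 : w 0 = 1) (hb0 : b 0 = 0)
    (hw : ∀ n, w (n + 1) = (p - 5) * w n + (p - 6) * b n)
    (hb : ∀ n, b (n + 1) = w n + b n)
    (hu : ∀ n, u n = w n + b n) :
    u 0 = 1 ∧ u 1 = p - 4 ∧ ∀ n, u (n + 2) + u n = (p - 4) * u (n + 1) := by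
  obtain ⟨q, rfl⟩ := Nat.exists_eq_add_of_le hp
  refine ⟨by simp [hu, hw0, hb0], ?_, ?_⟩
  · have := hw 0
    have := hb 0
    simp [hu, hw0, hb0] at *
    omega
  · intro n
    have h1 := hw (n + 1)
    have h2 := hb (n + 1)
    have h3 := hb n
    have u1 := hu n
    have u2 := hu (n + 1)
    have u3 := hu (n + 2)
    have e5 : 7 + q - 5 = q + 2 := by omega
    have e6 : 7 + q - 6 = q + 1 := by omega
    have e4 : 7 + q - 4 = q + 3 := by omega
    rw [e5, e6] at h1
    rw [e4]
    -- u(n+2) = (q+3) w(n+1) + (q+2) b(n+1), and b(n+1) = w n + b n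
    nlinarith [h1, h2, h3, u1, u2, u3]
end

section
/- Let p ≥ 7 be an integer and let u : ℕ → ℤ be defined by u 0 = 1, u 1 = p − 4, and u (n+2) = (p − 4)·u (n+1) − u n. Then every natural number N can be written as N = Σ_{i=0}^{k} a_i · u i for some k and some digits a_i ∈ ℕ with a_i ≤ p − 3 for all i. -/
/-- For an integer `p ≥ 7` and the sequence `u : ℕ → ℤ` with `u 0 = 1`,
`u 1 = p - 4`, `u (n+2) = (p-4) * u (n+1) - u n`, every natural number `N`
can be written as `N = ∑_{i=0}^{k} a i * u i` for some `k` and digits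
`a i ∈ ℕ` with `a i ≤ p - 3` for all `i`. -/
theorem sector_tree_representation (p : ℤ) (hp : 7 ≤ p) (u : ℕ → ℤ)
    (hu0 : u 0 = 1) (hu1 : u 1 = p - 4)
    (hrec : ∀ n, u (n + 2) = (p - 4) * u (n + 1) - u n)
    (N : ℕ) :
    ∃ (k : ℕ) (a : ℕ → ℕ), (∀ i, (a i : ℤ) ≤ p - 3) ∧
      (N : ℤ) = ∑ i ∈ Finset.range (k + 1), (a i : ℤ) * u i := by
  -- positivity and growth of u
  have key : ∀ n, 1 ≤ u n ∧ u n + 1 ≤ u (n + 1) := by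
    intro n
    induction n with
    | zero => constructor <;> simp [hu0, hu1] <;> linarith
    | succ m ih =>
      obtain ⟨h1, h2⟩ := ih
      have h3 : u (m + 2) = (p - 4) * u (m + 1) - u m := hrec m
      constructor
      · linarith
      · nlinarith
  have upos : ∀ n, 1 ≤ u n := fun n => (key n).1
  have ulin : ∀ n : ℕ, (n : ℤ) + 1 ≤ u n := by
    intro n
    induction n with
    | zero => simp [hu0]
    | succ m ih =>
      have := (key m).2
      push_cast
      linarith
  -- main lemma: every N < u (k+1) is representable with indices ≤ k
  have main : ∀ k, ∀ N : ℕ, (N : ℤ) < u (k + 1) →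
      ∃ a : ℕ → ℕ, (∀ i, (a i : ℤ) ≤ p - 3) ∧
        (N : ℤ) = ∑ i ∈ Finset.range (k + 1), (a i : ℤ) * u i := by
    intro k
    induction k with
    | zero =>
      intro N hN
      refine ⟨fun _ => N, ?_, ?_⟩
      · intro i
        rw [hu1] at hN
        linarith
      · simp [hu0]
    | succ m ih =>
      intro N hN
      set d : ℕ := (u (m + 1)).toNat with hd
      have hdpos : 0 < d := by
        have h := upos (m + 1)
        simp only [hd]
        omega
      have hdZ : (d : ℤ) = u (m + 1) := by
        simp [hd, Int.toNat_of_nonneg (by linarith [upos (m+1)] : (0:ℤ) ≤ u (m+1))]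
      set q : ℕ := N / d with hq
      set r : ℕ := N % d with hr
      have hrlt : (r : ℤ) < u (m + 1) := by
        rw [← hdZ]
        exact_mod_cast Nat.mod_lt N hdpos
      obtain ⟨a, ha, hsum⟩ := ih r hrlt
      have hNdq : (N : ℤ) = (q : ℤ) * u (m + 1) + (r : ℤ) := by
        have := Nat.div_add_mod N d
        have : (N : ℤ) = (d : ℤ) * q + r := by exact_mod_cast this.symm
        rw [this, hdZ]; ring
      have hqle : (q : ℤ) ≤ p - 5 := by
        by_contra h
        push_neg at h
        have h4 : p - 4 ≤ (q : ℤ) := by linarith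
        have h5 : (q : ℤ) * u (m + 1) ≤ (N : ℤ) := by
          have : (0 : ℤ) ≤ r := by positivity
          linarith
        have h6 : u (m + 2) = (p - 4) * u (m + 1) - u m := hrec m
        have h7 : (p - 4) * u (m + 1) ≤ (q : ℤ) * u (m + 1) := by
          apply mul_le_mul_of_nonneg_right h4
          linarith [upos (m + 1)]
        linarith [upos m]
      refine ⟨fun i => if i = m + 1 then q else a i, ?_, ?_⟩
      · intro i
        by_cases hi : i = m + 1 <;> simp [hi]
        · linarith
        · exact ha i
      · rw [Finset.sum_range_succ]
        simp only [if_pos rfl]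
        have heq : ∑ i ∈ Finset.range (m + 1),
            ((if i = m + 1 then (q:ℤ) else (a i : ℤ))) * u i
            = ∑ i ∈ Finset.range (m + 1), (a i : ℤ) * u i := by
          apply Finset.sum_congr rfl
          intro i hi
          have : i ≠ m + 1 := by
            have := Finset.mem_range.mp hi; omega
          simp [this]
        push_cast
        rw [heq, ← hsum]
        linarith [hNdq]
  -- conclude: pick k = N, then N < u (N+1)
  have : (N : ℤ) < u (N + 1) := by
    have := ulin (N + 1)
    push_cast at this
    linarith
  obtain ⟨a, ha, hs⟩ := main N N this
  exact ⟨N, a, ha, hs⟩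
end

section
/- Let p ≥ 7 be an integer and let u : ℕ → ℤ be defined by u 0 = 1, u 1 = p − 4, and u (n+2) = (p − 4)·u (n+1) − u n. Then every natural number N has exactly one finitely supported digit sequence a : ℕ → ℕ such that N = Σ_i a i · u i and, for every k ≥ 1, Σ_{i<k} a i · u i < u k. (This is the normalized — greedy — representation, which makes the coordinate of each tile unique.) -/
/-- For an integer `p ≥ 7` and the sequence `u : ℕ → ℤ` with `u 0 = 1`,
`u 1 = p - 4`, `u (n+2) = (p-4) * u (n+1) - u n`, every natural number `N`
has exactly one finitely supported digit sequence `a : ℕ → ℕ` such that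
`N = ∑ᶠ i, a i * u i` and, for every `k ≥ 1`,
`∑_{i<k} a i * u i < u k` (the normalized, greedy, representation). -/
theorem sector_tree_greedy_representation_unique (p : ℤ) (hp : 7 ≤ p)
    (u : ℕ → ℤ) (hu0 : u 0 = 1) (hu1 : u 1 = p - 4)
    (hrec : ∀ n, u (n + 2) = (p - 4) * u (n + 1) - u n)
    (N : ℕ) :
    ∃! a : ℕ → ℕ, {i | a i ≠ 0}.Finite ∧
      (N : ℤ) = ∑ᶠ i, (a i : ℤ) * u i ∧
      ∀ k, 1 ≤ k → ∑ i ∈ Finset.range k, (a i : ℤ) * u i < u k := by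
  have key : ∀ n, 0 < u n ∧ u n < u (n + 1) := by
    intro n
    induction n with
    | zero =>
      constructor
      · rw [hu0]; norm_num
      · rw [hu0, hu1]; linarith
    | succ n ih =>
      obtain ⟨h1, h2⟩ := ih
      refine ⟨h1.trans h2, ?_⟩
      rw [hrec n]
      nlinarith
  have hpos : ∀ n, 0 < u n := fun n => (key n).1
  have hmono : StrictMono u := strictMono_nat_of_lt_succ fun n => (key n).2
  have hge : ∀ n : ℕ, (n : ℤ) + 1 ≤ u n := by
    intro n
    induction n with
    | zero => simp [hu0]
    | succ n ih =>
      have h2 := (key n).2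
      push_cast
      push_cast at ih
      linarith
  -- translating finsum to finite range sums
  have hfin_sum : ∀ (c : ℕ → ℕ) (m : ℕ), (∀ i, c i ≠ 0 → i < m) →
      ∑ᶠ i, (c i : ℤ) * u i = ∑ i ∈ Finset.range m, (c i : ℤ) * u i := by
    intro c m hm
    apply finsum_eq_finset_sum_of_support_subset
    intro i hi
    simp only [Function.mem_support] at hi
    simp only [Finset.coe_range, Set.mem_Iio]
    apply hm
    intro h0
    apply hi
    simp [h0]
  -- Existence, with the partial-sum bound for all k (including k = 0)
  have exist : ∀ N : ℕ, ∃ a : ℕ → ℕ, (∀ i, a i ≠ 0 → i < N + 1) ∧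
      (N : ℤ) = ∑ᶠ i, (a i : ℤ) * u i ∧
      ∀ k, ∑ i ∈ Finset.range k, (a i : ℤ) * u i < u k := by
    intro N
    induction N using Nat.strong_induction_on with
    | _ N ih =>
    rcases Nat.eq_zero_or_pos N with h0 | hNpos
    · subst h0
      refine ⟨fun _ => 0, by simp, by simp, ?_⟩
      intro k
      simpa using hpos k
    · classical
      set P : ℕ → Prop := fun k => u k ≤ (N : ℤ) with hPdef
      have hP0 : P 0 := by simp only [hPdef, hu0]; exact_mod_cast hNpos
      set k := Nat.findGreatest P N with hkdef
      have hk_le : u k ≤ (N : ℤ) := Nat.findGreatest_spec (Nat.zero_le N) hP0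
      have hk_lt : (N : ℤ) < u (k + 1) := by
        by_cases h : k + 1 ≤ N
        · have hgt : ¬ P (k + 1) :=
            Nat.findGreatest_is_greatest (by omega) h
          simpa [hPdef] using not_le.mp (by simpa [hPdef] using hgt)
        · have hNk : N ≤ k := by omega
          have := hge (k + 1)
          push_cast at this
          have : (N : ℤ) ≤ (k : ℤ) := by exact_mod_cast hNk
          have h2 := hge (k + 1)
          push_cast at h2
          linarith
      set uk := (u k).toNat with hukdef
      have hukZ : (uk : ℤ) = u k := Int.toNat_of_nonneg (hpos k).le
      have huk_pos : 0 < uk := by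
        have : (0 : ℤ) < (uk : ℤ) := hukZ ▸ hpos k
        exact_mod_cast this
      have huk_leN : uk ≤ N := by
        have : (uk : ℤ) ≤ (N : ℤ) := hukZ ▸ hk_le
        exact_mod_cast this
      set d := N / uk with hddef
      set r := N % uk with hrdef
      have hr_lt : r < uk := Nat.mod_lt _ huk_pos
      have hr_ltN : r < N := lt_of_lt_of_le hr_lt huk_leN
      obtain ⟨b, hbsupp, hbsum, hblt⟩ := ih r hr_ltN
      have hbsumM : (r : ℤ) = ∑ i ∈ Finset.range (r + 1), (b i : ℤ) * u i := by
        rw [hbsum, hfin_sum b (r + 1) hbsupp]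
      have hbz : ∀ i, k ≤ i → b i = 0 := by
        intro i hi
        by_contra hbi
        have hiM : i < r + 1 := hbsupp i hbi
        have h1 : (b i : ℤ) * u i ≤ ∑ j ∈ Finset.range (r + 1), (b j : ℤ) * u j :=
          Finset.single_le_sum
            (fun j _ => mul_nonneg (by positivity) (hpos j).le)
            (Finset.mem_range.mpr hiM)
        have h2 : u k ≤ u i := hmono.monotone hi
        have h3 : (1 : ℤ) ≤ (b i : ℤ) := by
          exact_mod_cast Nat.one_le_iff_ne_zero.mpr hbi
        have h4 : (r : ℤ) < u k := by
          rw [← hukZ]; exact_mod_cast hr_lt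
        nlinarith [hpos i]
      have hbsupp' : ∀ i, b i ≠ 0 → i < k := by
        intro i hi
        by_contra h
        exact hi (hbz i (by omega))
      have hbsumk : (r : ℤ) = ∑ i ∈ Finset.range k, (b i : ℤ) * u i := by
        rw [hbsum, hfin_sum b k hbsupp']
      set a : ℕ → ℕ := fun i => if i = k then d else b i with hadef
      have haz : ∀ i, k < i → a i = 0 := by
        intro i hi
        simp only [hadef]
        rw [if_neg (by omega)]
        exact hbz i hi.le
      have hasub : ∀ i, a i ≠ 0 → i < k + 1 := by
        intro i hi
        by_contra h
        exact hi (haz i (by omega))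
      have hdN : (d : ℤ) * u k + (r : ℤ) = (N : ℤ) := by
        have := Nat.div_add_mod N uk
        have hc : ((uk * d + r : ℕ) : ℤ) = (N : ℤ) := by
          rw [← hddef, ← hrdef] at *
          exact_mod_cast congrArg (Nat.cast : ℕ → ℤ) this
        push_cast at hc
        rw [← hukZ]
        linarith
      have hsum_eq : ∑ i ∈ Finset.range (k + 1), (a i : ℤ) * u i = (N : ℤ) := by
        rw [Finset.sum_range_succ]
        have e1 : ∀ i ∈ Finset.range k, (a i : ℤ) * u i = (b i : ℤ) * u i := by
          intro i hi
          simp [hadef, (Finset.mem_range.mp hi).ne]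
        rw [Finset.sum_congr rfl e1, ← hbsumk]
        have hak : a k = d := by simp [hadef]
        rw [hak]
        linarith
      have hkN : k < N := by
        have h4 := hge k
        have hkk : (k : ℤ) + 1 ≤ (N : ℤ) := le_trans h4 hk_le
        exact_mod_cast (by linarith : (k : ℤ) < (N : ℤ))
      refine ⟨a, ?_, ?_, ?_⟩
      · intro i hi
        have := hasub i hi
        omega
      · rw [hfin_sum a (k + 1) hasub, hsum_eq]
      · intro j
        rcases le_or_gt j k with hj | hj
        · have e : ∑ i ∈ Finset.range j, (a i : ℤ) * u i
              = ∑ i ∈ Finset.range j, (b i : ℤ) * u i := by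
            refine Finset.sum_congr rfl fun i hi => ?_
            have hij := Finset.mem_range.mp hi
            have hik : i ≠ k := by omega
            simp only [hadef]
            rw [if_neg hik]
          rw [e]
          exact hblt j
        · have hsub : ∑ i ∈ Finset.range (k + 1), (a i : ℤ) * u i
              = ∑ i ∈ Finset.range j, (a i : ℤ) * u i := by
            apply Finset.sum_subset (Finset.range_subset_range.mpr (by omega))
            intro i hi hni
            have : k + 1 ≤ i := by
              simp only [Finset.mem_range, not_lt] at hni
              exact hni
            rw [haz i (by omega)]
            simp
          rw [← hsub, hsum_eq]
          calc (N : ℤ) < u (k + 1) := hk_lt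
            _ ≤ u j := hmono.monotone (by omega)
  -- Uniqueness
  have uniq : ∀ a b : ℕ → ℕ, {i | a i ≠ 0}.Finite → {i | b i ≠ 0}.Finite →
      (∑ᶠ i, (a i : ℤ) * u i = ∑ᶠ i, (b i : ℤ) * u i) →
      (∀ k, 1 ≤ k → ∑ i ∈ Finset.range k, (a i : ℤ) * u i < u k) →
      (∀ k, 1 ≤ k → ∑ i ∈ Finset.range k, (b i : ℤ) * u i < u k) →
      a = b := by
    intro a b hafin hbfin hsum ha hb
    by_contra hne
    have hS : {i | a i ≠ b i}.Finite := by
      apply (hafin.union hbfin).subset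
      intro i hi
      by_contra h
      simp only [Set.mem_union, Set.mem_setOf_eq, not_or, not_not] at h
      exact hi (by rw [h.1, h.2])
    have hSne : {i | a i ≠ b i}.Nonempty := Function.ne_iff.mp hne
    classical
    set s : Finset ℕ := hS.toFinset with hsdef
    have hsne : s.Nonempty := by
      obtain ⟨i, hi⟩ := hSne
      exact ⟨i, hS.mem_toFinset.mpr hi⟩
    set k := s.max' hsne with hkdef
    have hkS : a k ≠ b k := hS.mem_toFinset.mp (s.max'_mem hsne)
    have htail : ∀ i, k < i → a i = b i := by
      intro i hi
      by_contra h
      have := s.le_max' i (hS.mem_toFinset.mpr h)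
      omega
    obtain ⟨m1, hm1⟩ := hafin.bddAbove
    obtain ⟨m2, hm2⟩ := hbfin.bddAbove
    set M := max (max m1 m2) k + 1 with hMdef
    have hasub : ∀ i, a i ≠ 0 → i < M := by
      intro i hi
      have := hm1 hi
      omega
    have hbsub : ∀ i, b i ≠ 0 → i < M := by
      intro i hi
      have := hm2 hi
      omega
    rw [hfin_sum a M hasub, hfin_sum b M hbsub] at hsum
    have hkM : k + 1 ≤ M := by omega
    have hsplit : ∀ c : ℕ → ℕ, ∑ i ∈ Finset.range M, (c i : ℤ) * u i
        = ∑ i ∈ Finset.range (k + 1), (c i : ℤ) * u i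
          + ∑ i ∈ Finset.Ico (k + 1) M, (c i : ℤ) * u i :=
      fun c => (Finset.sum_range_add_sum_Ico _ hkM).symm
    rw [hsplit a, hsplit b] at hsum
    have htsum : ∑ i ∈ Finset.Ico (k + 1) M, (a i : ℤ) * u i
        = ∑ i ∈ Finset.Ico (k + 1) M, (b i : ℤ) * u i := by
      refine Finset.sum_congr rfl fun i hi => ?_
      have := Finset.mem_Ico.mp hi
      rw [htail i (by omega)]
    have hhead : ∑ i ∈ Finset.range (k + 1), (a i : ℤ) * u i
        = ∑ i ∈ Finset.range (k + 1), (b i : ℤ) * u i := by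
      rw [htsum] at hsum
      linarith
    rw [Finset.sum_range_succ, Finset.sum_range_succ] at hhead
    have hbnd : ∀ c : ℕ → ℕ,
        (∀ j, 1 ≤ j → ∑ i ∈ Finset.range j, (c i : ℤ) * u i < u j) →
        0 ≤ ∑ i ∈ Finset.range k, (c i : ℤ) * u i ∧
          ∑ i ∈ Finset.range k, (c i : ℤ) * u i < u k := by
      intro c hc
      refine ⟨Finset.sum_nonneg fun i _ => mul_nonneg (by positivity) (hpos i).le, ?_⟩
      rcases Nat.eq_zero_or_pos k with h | h
      · rw [h]
        simp [hu0]
      · exact hc k h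
    obtain ⟨ha0, ha1⟩ := hbnd a ha
    obtain ⟨hb0, hb1⟩ := hbnd b hb
    have hk_ne : (a k : ℤ) ≠ (b k : ℤ) := by exact_mod_cast hkS
    rcases lt_trichotomy ((a k : ℤ)) ((b k : ℤ)) with h | h | h
    · have h1 : (a k : ℤ) + 1 ≤ (b k : ℤ) := by omega
      have h2 : u k ≤ ((b k : ℤ) - (a k : ℤ)) * u k :=
        le_mul_of_one_le_left (hpos k).le (by linarith)
      nlinarith
    · exact hk_ne h
    · have h1 : (b k : ℤ) + 1 ≤ (a k : ℤ) := by omega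
      have h2 : u k ≤ ((a k : ℤ) - (b k : ℤ)) * u k :=
        le_mul_of_one_le_left (hpos k).le (by linarith)
      nlinarith
  obtain ⟨a, hasupp, hasum, halt⟩ := exist N
  refine ⟨a, ⟨?_, hasum, fun k _ => halt k⟩, ?_⟩
  · exact (Set.finite_Iio (N + 1)).subset fun i hi => hasupp i hi
  · intro c hc
    exact uniq c a hc.1 ((Set.finite_Iio (N + 1)).subset fun i hi => hasupp i hi)
      (hc.2.1 ▸ hasum ▸ rfl) hc.2.2 fun k _ => halt k
end
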